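/- arXiv:1406.3740 — 5 statements merged into one kernel-verified Lean document; each statement's English description precedes it below -/
import Mathlib

section
/- Let A and E be n×n real matrices and let ‖·‖ denote the operator norm induced by any ℓ^p vector norm (1 ≤ p ≤ ∞). Then |det(A+E) − det(A)| ≤ n · max{‖A‖, ‖A+E‖}^(n−1) · ‖E‖. -/
noncomputable section

open Matrix

/-! ### Auxiliary lemmas -/

section Aux

variable {n : ℕ}

/-- Hadamard's inequality, column version. -/
lemma friedland_aux_hadamard_cols (N : Matrix (Fin n) (Fin n) ℝ) :
    |N.det| ≤ ∏ j, Real.sqrt (∑ i, (N i j)^2) := by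
  classical
  haveI : Fact (Module.finrank ℝ (EuclideanSpace ℝ (Fin n)) = n) :=
    ⟨by rw [finrank_euclideanSpace, Fintype.card_fin]⟩
  set f : Fin n → EuclideanSpace ℝ (Fin n) :=
    fun j => (WithLp.equiv 2 (Fin n → ℝ)).symm (fun i => N i j) with hf
  set s : OrthonormalBasis (Fin n) ℝ (EuclideanSpace ℝ (Fin n)) :=
    EuclideanSpace.basisFun (Fin n) ℝ with hs
  set o : Orientation ℝ (EuclideanSpace ℝ (Fin n)) (Fin n) := s.toBasis.orientation with ho
  have h1 : s.toBasis.det f = N.det := by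
    have hm : s.toBasis.toMatrix f = N := by
      ext i j
      simp [Module.Basis.toMatrix_apply, hs, hf, EuclideanSpace.basisFun]
    rw [Module.Basis.det_apply, hm]
  have h2 : |N.det| = |o.volumeForm f| := by
    rw [o.volumeForm_robust' s f, h1]
  have h3 : |o.volumeForm f| ≤ ∏ j, ‖f j‖ := o.abs_volumeForm_apply_le f
  have h7 : ∀ j, ‖f j‖ = Real.sqrt (∑ i, (N i j)^2) := by
    intro j
    rw [EuclideanSpace.norm_eq]
    congr 1
    refine Finset.sum_congr rfl fun i _ => ?_
    rw [hf]
    simp [WithLp.equiv_symm_apply, PiLp.toLp_apply, Real.norm_eq_abs, sq_abs]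
  rw [h2]
  calc |o.volumeForm f| ≤ ∏ j, ‖f j‖ := h3
    _ = ∏ j, Real.sqrt (∑ i, (N i j)^2) := Finset.prod_congr rfl (fun j _ => h7 j)

/-- Hadamard's inequality, row version. -/
lemma friedland_aux_hadamard_rows (N : Matrix (Fin n) (Fin n) ℝ) :
    |N.det| ≤ ∏ i, Real.sqrt (∑ j, (N i j)^2) := by
  have h := friedland_aux_hadamard_cols Nᵀ
  rw [Matrix.det_transpose] at h
  simpa [Matrix.transpose_apply] using h

lemma friedland_aux_det_le_of_rows (N : Matrix (Fin n) (Fin n) ℝ) (c : Fin n → ℝ)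
    (h : ∀ i, Real.sqrt (∑ j, (N i j)^2) ≤ c i) : |N.det| ≤ ∏ i, c i :=
  (friedland_aux_hadamard_rows N).trans <|
    Finset.prod_le_prod (fun i _ => Real.sqrt_nonneg _) (fun i _ => h i)

lemma friedland_aux_prod_ite (k : Fin n) (K e : ℝ) :
    (∏ i, (if i = k then e else K)) = K ^ (n-1) * e := by
  classical
  rw [← Finset.mul_prod_erase Finset.univ _ (Finset.mem_univ k)]
  rw [if_pos rfl]
  rw [Finset.prod_congr rfl (fun i hi => if_neg (Finset.ne_of_mem_erase hi))]
  rw [Finset.prod_const, Finset.card_erase_of_mem (Finset.mem_univ k), Finset.card_univ,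
    Fintype.card_fin, mul_comm]

/-- coordinate bound: `|x i| ≤ ‖x‖_p`. -/
lemma friedland_aux_coord_le_norm (p : ENNReal) [Fact (1 ≤ p)] (x : Fin n → ℝ) (i : Fin n) :
    |x i| ≤ ‖(WithLp.equiv p (Fin n → ℝ)).symm x‖ := by
  rcases eq_or_ne p ⊤ with hp | hp
  · subst hp
    rw [show ‖(WithLp.equiv ⊤ (Fin n → ℝ)).symm x‖ = ⨆ j, ‖((WithLp.equiv ⊤ (Fin n → ℝ)).symm x) j‖
        from PiLp.norm_eq_ciSup _]
    have := le_ciSup (f := fun j => ‖((WithLp.equiv ⊤ (Fin n → ℝ)).symm x) j‖)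
      (Finite.bddAbove_range _) i
    simpa [WithLp.equiv_symm_apply, PiLp.toLp_apply] using this
  · have ha : 0 < p.toReal := ENNReal.toReal_pos (by
      have : (1 : ENNReal) ≤ p := Fact.out
      intro h0; rw [h0] at this; exact absurd this (by simp)) hp
    rw [PiLp.norm_eq_sum ha]
    have h1 : |x i| ^ p.toReal ≤ ∑ j, ‖((WithLp.equiv p (Fin n → ℝ)).symm x) j‖ ^ p.toReal := by
      have : ∀ j ∈ Finset.univ, (0:ℝ) ≤ ‖((WithLp.equiv p (Fin n → ℝ)).symm x) j‖ ^ p.toReal :=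
        fun j _ => Real.rpow_nonneg (norm_nonneg _) _
      have := Finset.single_le_sum this (Finset.mem_univ i)
      simpa [WithLp.equiv_symm_apply, PiLp.toLp_apply, Real.norm_eq_abs] using this
    calc |x i| = (|x i| ^ p.toReal) ^ (1 / p.toReal) := by
          rw [one_div, Real.rpow_rpow_inv (abs_nonneg _) ha.ne']
      _ ≤ (∑ j, ‖((WithLp.equiv p (Fin n → ℝ)).symm x) j‖ ^ p.toReal) ^ (1 / p.toReal) :=
          Real.rpow_le_rpow (Real.rpow_nonneg (abs_nonneg _) _) h1 (by positivity)

/-- ℓ^p norms are antitone in p. -/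
lemma friedland_aux_lp_norm_antitone (p q : ENNReal) [Fact (1 ≤ p)] [Fact (1 ≤ q)] (hpq : p ≤ q)
    (x : Fin n → ℝ) :
    ‖(WithLp.equiv q (Fin n → ℝ)).symm x‖ ≤ ‖(WithLp.equiv p (Fin n → ℝ)).symm x‖ := by
  rcases eq_or_ne q ⊤ with hq | hq
  · subst hq
    rw [show ‖(WithLp.equiv ⊤ (Fin n → ℝ)).symm x‖ = ⨆ j, ‖((WithLp.equiv ⊤ (Fin n → ℝ)).symm x) j‖
        from PiLp.norm_eq_ciSup _]
    rcases Nat.eq_zero_or_pos n with hn | hn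
    · subst hn
      simp only [Real.iSup_of_isEmpty]
      positivity
    · haveI : Nonempty (Fin n) := Fin.pos_iff_nonempty.mp hn
      refine ciSup_le fun i => ?_
      simpa [WithLp.equiv_symm_apply, PiLp.toLp_apply, Real.norm_eq_abs] using
        friedland_aux_coord_le_norm p x i
  · have hp : p ≠ ⊤ := fun h => hq (top_le_iff.mp (h ▸ hpq))
    have hp1 : (1 : ENNReal) ≤ p := Fact.out
    have ha : 0 < p.toReal := ENNReal.toReal_pos (fun h0 => by simp [h0] at hp1) hp
    have hb : 0 < q.toReal := ENNReal.toReal_pos (fun h0 => by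
      have h1q : (1:ENNReal) ≤ q := Fact.out
      simp [h0] at h1q) hq
    have hab : p.toReal ≤ q.toReal := ENNReal.toReal_mono hq hpq
    set s := ‖(WithLp.equiv p (Fin n → ℝ)).symm x‖ with hs
    have hs0 : 0 ≤ s := norm_nonneg _
    have hcoord : ∀ i, |x i| ≤ s := fun i => friedland_aux_coord_le_norm p x i
    have hsum_a : ∑ i, |x i| ^ p.toReal = s ^ p.toReal := by
      have h2 : s ^ p.toReal = ∑ i, ‖((WithLp.equiv p (Fin n → ℝ)).symm x) i‖ ^ p.toReal := by
        rw [hs, PiLp.norm_eq_sum ha, one_div, Real.rpow_inv_rpow (by positivity) ha.ne']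
      rw [h2]
      exact Finset.sum_congr rfl fun i _ => by rw [WithLp.equiv_symm_apply, PiLp.toLp_apply, Real.norm_eq_abs]
    have key : ∑ i, ‖((WithLp.equiv q (Fin n → ℝ)).symm x) i‖ ^ q.toReal ≤ s ^ q.toReal := by
      have hba : p.toReal + (q.toReal - p.toReal) = q.toReal := by ring
      have h1 : ∀ i : Fin n, |x i| ^ q.toReal ≤ |x i| ^ p.toReal * s ^ (q.toReal - p.toReal) := by
        intro i
        have h2 : |x i| ^ q.toReal = |x i| ^ p.toReal * |x i| ^ (q.toReal - p.toReal) := by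
          rw [← Real.rpow_add' (abs_nonneg _) (by rw [hba]; exact hb.ne')]
          rw [hba]
        rw [h2]
        exact mul_le_mul_of_nonneg_left
          (Real.rpow_le_rpow (abs_nonneg _) (hcoord i) (sub_nonneg.mpr hab))
          (Real.rpow_nonneg (abs_nonneg _) _)
      calc ∑ i, ‖((WithLp.equiv q (Fin n → ℝ)).symm x) i‖ ^ q.toReal
          = ∑ i, |x i| ^ q.toReal := Finset.sum_congr rfl fun i _ => by
            rw [WithLp.equiv_symm_apply, PiLp.toLp_apply, Real.norm_eq_abs]
        _ ≤ ∑ i, |x i| ^ p.toReal * s ^ (q.toReal - p.toReal) :=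
            Finset.sum_le_sum fun i _ => h1 i
        _ = (∑ i, |x i| ^ p.toReal) * s ^ (q.toReal - p.toReal) := by rw [← Finset.sum_mul]
        _ = s ^ p.toReal * s ^ (q.toReal - p.toReal) := by rw [hsum_a]
        _ = s ^ q.toReal := by
            rw [← Real.rpow_add' hs0 (by rw [hba]; exact hb.ne'), hba]
    rw [PiLp.norm_eq_sum hb]
    calc (∑ i, ‖((WithLp.equiv q (Fin n → ℝ)).symm x) i‖ ^ q.toReal) ^ (1/q.toReal)
        ≤ (s ^ q.toReal) ^ (1/q.toReal) := Real.rpow_le_rpow (by positivity) key (by positivity)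
      _ = s := by rw [one_div, Real.rpow_rpow_inv hs0 hb.ne']

/-- The ℓ² norm of a vector as a square root of a sum of squares. -/
lemma friedland_aux_norm_two_eq (x : Fin n → ℝ) :
    ‖(WithLp.equiv 2 (Fin n → ℝ)).symm x‖ = Real.sqrt (∑ i, (x i)^2) := by
  rw [show ((WithLp.equiv 2 (Fin n → ℝ)).symm x : EuclideanSpace ℝ (Fin n)) =
    (WithLp.equiv 2 (Fin n → ℝ)).symm x from rfl]
  rw [EuclideanSpace.norm_eq]
  congr 1
  exact Finset.sum_congr rfl fun i _ => by
    rw [WithLp.equiv_symm_apply, PiLp.toLp_apply, Real.norm_eq_abs, sq_abs]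

end Aux

/-- The operator norm of an `n × n` real matrix induced by the `ℓ^p` norm on `ℝ^n`. -/
def lpOpNorm (p : ENNReal) [Fact (1 ≤ p)] {n : ℕ} (A : Matrix (Fin n) (Fin n) ℝ) : ℝ :=
  ‖LinearMap.toContinuousLinearMap
    ((((PiLp.continuousLinearEquiv p ℝ (fun _ : Fin n => ℝ)).toLinearEquiv).symm.toLinearMap.comp
        A.mulVecLin).comp
      ((PiLp.continuousLinearEquiv p ℝ (fun _ : Fin n => ℝ)).toLinearEquiv).toLinearMap)‖

section Aux2

variable {n : ℕ}

lemma friedland_aux_lpOpNorm_nonneg (p : ENNReal) [Fact (1 ≤ p)] (A : Matrix (Fin n) (Fin n) ℝ) :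
    0 ≤ lpOpNorm p A := norm_nonneg _

lemma friedland_aux_lpOpNorm_mulVec (p : ENNReal) [Fact (1 ≤ p)] (A : Matrix (Fin n) (Fin n) ℝ)
    (v : Fin n → ℝ) :
    ‖(WithLp.equiv p (Fin n → ℝ)).symm (A.mulVec v)‖ ≤
      lpOpNorm p A * ‖(WithLp.equiv p (Fin n → ℝ)).symm v‖ := by
  have h := ContinuousLinearMap.le_opNorm
    (LinearMap.toContinuousLinearMap
      ((((PiLp.continuousLinearEquiv p ℝ (fun _ : Fin n => ℝ)).toLinearEquiv).symm.toLinearMap.comp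
          A.mulVecLin).comp
        ((PiLp.continuousLinearEquiv p ℝ (fun _ : Fin n => ℝ)).toLinearEquiv).toLinearMap))
    ((WithLp.equiv p (Fin n → ℝ)).symm v)
  simpa [lpOpNorm, PiLp.coe_continuousLinearEquiv] using h

/-- Column bound for `p ≤ 2`. -/
lemma friedland_aux_col_sqrt_le (p : ENNReal) [Fact (1 ≤ p)] (hp : p ≤ 2)
    (X : Matrix (Fin n) (Fin n) ℝ) (j : Fin n) :
    Real.sqrt (∑ i, (X i j)^2) ≤ lpOpNorm p X := by
  haveI : Fact ((1:ENNReal) ≤ 2) := ⟨one_le_two⟩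
  have hcol : (fun i => X i j) = X.mulVec (Pi.single j 1) := by
    ext i
    simp [Matrix.mulVec_single]
  calc Real.sqrt (∑ i, (X i j)^2)
      = ‖(WithLp.equiv 2 (Fin n → ℝ)).symm (fun i => X i j)‖ :=
        (friedland_aux_norm_two_eq _).symm
    _ ≤ ‖(WithLp.equiv p (Fin n → ℝ)).symm (fun i => X i j)‖ :=
        friedland_aux_lp_norm_antitone p 2 hp _
    _ = ‖(WithLp.equiv p (Fin n → ℝ)).symm (X.mulVec (Pi.single j 1))‖ := by rw [hcol]
    _ ≤ lpOpNorm p X * ‖(WithLp.equiv p (Fin n → ℝ)).symm (Pi.single j 1)‖ :=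
        friedland_aux_lpOpNorm_mulVec p X _
    _ = lpOpNorm p X := by
        rw [WithLp.equiv_symm_apply, PiLp.norm_toLp_single p (fun _ : Fin n => ℝ) j (1:ℝ)]
        simp

/-- Row bound for `2 ≤ p`. -/
lemma friedland_aux_row_sqrt_le (p : ENNReal) [Fact (1 ≤ p)] (hp : 2 ≤ p)
    (X : Matrix (Fin n) (Fin n) ℝ) (i : Fin n) :
    Real.sqrt (∑ j, (X i j)^2) ≤ lpOpNorm p X := by
  haveI : Fact ((1:ENNReal) ≤ 2) := ⟨one_le_two⟩
  set r : Fin n → ℝ := fun j => X i j with hr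
  set N2 : ℝ := ‖(WithLp.equiv 2 (Fin n → ℝ)).symm r‖ with hN2
  have hN2nonneg : 0 ≤ N2 := norm_nonneg _
  have hsqrt : Real.sqrt (∑ j, (X i j)^2) = N2 := (friedland_aux_norm_two_eq r).symm
  rcases eq_or_lt_of_le hN2nonneg with h0 | h0
  · rw [hsqrt, ← h0]; exact friedland_aux_lpOpNorm_nonneg p X
  · have hsq : N2 ^ 2 = ∑ j, r j ^ 2 := by
      rw [hN2, friedland_aux_norm_two_eq,
        Real.sq_sqrt (Finset.sum_nonneg fun j _ => sq_nonneg _)]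
    have hdot : (X.mulVec r) i = ∑ j, r j ^ 2 := by
      simp [Matrix.mulVec, dotProduct, hr, sq, mul_comm]
    have h1 : N2 ^ 2 ≤ lpOpNorm p X * N2 := by
      calc N2 ^ 2 = (X.mulVec r) i := by rw [hsq, hdot]
        _ ≤ |(X.mulVec r) i| := le_abs_self _
        _ ≤ ‖(WithLp.equiv p (Fin n → ℝ)).symm (X.mulVec r)‖ :=
            friedland_aux_coord_le_norm p _ i
        _ ≤ lpOpNorm p X * ‖(WithLp.equiv p (Fin n → ℝ)).symm r‖ :=
            friedland_aux_lpOpNorm_mulVec p X r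
        _ ≤ lpOpNorm p X * N2 :=
            mul_le_mul_of_nonneg_left (friedland_aux_lp_norm_antitone 2 p hp r)
              (friedland_aux_lpOpNorm_nonneg p X)
    rw [hsqrt]
    exact (mul_le_mul_iff_left₀ h0).mp (by rw [← sq]; exact h1 : N2 * N2 ≤ lpOpNorm p X * N2)

/-- The core telescoping bound, stated for row-wise ℓ² bounds. -/
lemma friedland_aux_key_bound (A E : Matrix (Fin n) (Fin n) ℝ) (cA cAE cE : ℝ)
    (hA : ∀ i, Real.sqrt (∑ j, (A i j)^2) ≤ cA)
    (hAE : ∀ i, Real.sqrt (∑ j, ((A+E) i j)^2) ≤ cAE)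
    (hE : ∀ i, Real.sqrt (∑ j, (E i j)^2) ≤ cE) :
    |(A+E).det - A.det| ≤ n * max cA cAE ^ (n-1) * cE := by
  classical
  set K := max cA cAE with hK
  set M : ℕ → Matrix (Fin n) (Fin n) ℝ :=
    fun k => Matrix.of fun i j => if (i:ℕ) < k then (A+E) i j else A i j with hM
  set G : ℕ → Matrix (Fin n) (Fin n) ℝ :=
    fun k => Matrix.of fun i j =>
      if (i:ℕ) < k then (A+E) i j else if (i:ℕ) = k then E i j else A i j with hG
  have h0 : M 0 = A := by ext i j; simp [hM]
  have hn' : M n = A + E := by ext i j; simp [hM, i.isLt]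
  have hstep : ∀ k, k < n → (M (k+1)).det - (M k).det = (G k).det := by
    intro k hk
    set kf : Fin n := ⟨k, hk⟩ with hkf
    have e1 : M (k+1) = (M k).updateRow kf (A kf + E kf) := by
      ext i j
      rcases eq_or_ne i kf with h | h
      · subst h
        simp [hM, Matrix.updateRow_apply, hkf, Nat.lt_succ_self]
      · have hne : (i:ℕ) ≠ k := fun hh => h (Fin.ext (by simpa [hkf] using hh))
        rw [Matrix.updateRow_ne h]
        show (if (i:ℕ) < k+1 then (A+E) i j else A i j) = (if (i:ℕ) < k then (A+E) i j else A i j)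
        by_cases hik : (i:ℕ) < k
        · rw [if_pos (by omega : (i:ℕ) < k+1), if_pos hik]
        · rw [if_neg (by omega : ¬ (i:ℕ) < k+1), if_neg hik]
    have e2 : G k = (M k).updateRow kf (E kf) := by
      ext i j
      rcases eq_or_ne i kf with h | h
      · subst h
        simp [hG, Matrix.updateRow_apply, hkf]
      · have hne : (i:ℕ) ≠ k := fun hh => h (Fin.ext (by simpa [hkf] using hh))
        rw [Matrix.updateRow_ne h]
        show (if (i:ℕ) < k then (A+E) i j else if (i:ℕ) = k then E i j else A i j)
          = (if (i:ℕ) < k then (A+E) i j else A i j)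
        rw [if_neg hne]
    have e3 : (M k).updateRow kf (A kf) = M k := by
      have h4 : A kf = M k kf := by
        ext j
        simp [hM, hkf]
      rw [h4, Matrix.updateRow_eq_self]
    have e4 : (M (k+1)).det = (M k).det + (G k).det := by
      rw [e1, Matrix.det_updateRow_add (M k) kf (A kf) (E kf), e3, ← e2]
    rw [e4]; ring
  have htel : (A+E).det - A.det = ∑ k ∈ Finset.range n, (G k).det := by
    have hsum := Finset.sum_range_sub (fun k => (M k).det) n
    rw [h0, hn'] at hsum
    rw [← hsum]
    exact Finset.sum_congr rfl fun k hk => hstep k (Finset.mem_range.mp hk)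
  have hterm : ∀ k, k < n → |(G k).det| ≤ K ^ (n-1) * cE := by
    intro k hk
    set kf : Fin n := ⟨k, hk⟩ with hkf
    have h1 : |(G k).det| ≤ ∏ i, (if i = kf then cE else K) := by
      apply friedland_aux_det_le_of_rows
      intro i
      rcases eq_or_ne i kf with h | h
      · subst h
        rw [if_pos rfl]
        have hrow : ∀ j, G k kf j = E kf j := fun j => by simp [hG, hkf]
        calc Real.sqrt (∑ j, (G k kf j)^2) = Real.sqrt (∑ j, (E kf j)^2) := by
              congr 1; exact Finset.sum_congr rfl fun j _ => by rw [hrow j]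
          _ ≤ cE := hE kf
      · rw [if_neg h]
        have hne : (i:ℕ) ≠ k := fun hh => h (Fin.ext (by simpa [hkf] using hh))
        rcases lt_or_gt_of_ne hne with hlt | hgt
        · have hrow : ∀ j, G k i j = (A+E) i j := fun j => by simp [hG, hlt]
          calc Real.sqrt (∑ j, (G k i j)^2) = Real.sqrt (∑ j, ((A+E) i j)^2) := by
                congr 1; exact Finset.sum_congr rfl fun j _ => by rw [hrow j]
            _ ≤ cAE := hAE i
            _ ≤ K := le_max_right _ _
        · have hrow : ∀ j, G k i j = A i j := fun j => by
            simp [hG, Nat.lt_asymm hgt, hne]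
          calc Real.sqrt (∑ j, (G k i j)^2) = Real.sqrt (∑ j, (A i j)^2) := by
                congr 1; exact Finset.sum_congr rfl fun j _ => by rw [hrow j]
            _ ≤ cA := hA i
            _ ≤ K := le_max_left _ _
    calc |(G k).det| ≤ ∏ i, (if i = kf then cE else K) := h1
      _ = K ^ (n-1) * cE := friedland_aux_prod_ite kf K cE
  calc |(A+E).det - A.det| = |∑ k ∈ Finset.range n, (G k).det| := by rw [htel]
    _ ≤ ∑ k ∈ Finset.range n, |(G k).det| := Finset.abs_sum_le_sum_abs _ _
    _ ≤ ∑ k ∈ Finset.range n, K ^ (n-1) * cE :=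
        Finset.sum_le_sum fun k hk => hterm k (Finset.mem_range.mp hk)
    _ = n * K ^ (n-1) * cE := by
        rw [Finset.sum_const, Finset.card_range]; ring

end Aux2

/-- **Friedland's determinant perturbation bound.**  For `n × n` real matrices `A`
and `E`, and the operator norm induced by any `ℓ^p` norm (`1 ≤ p ≤ ∞`),
`|det(A+E) − det(A)| ≤ n · max{‖A‖_p, ‖A+E‖_p}^(n−1) · ‖E‖_p`. -/
theorem friedland_det_bound (p : ENNReal) [Fact (1 ≤ p)] {n : ℕ}
    (A E : Matrix (Fin n) (Fin n) ℝ) :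
    |(A + E).det - A.det| ≤
      n * max (lpOpNorm p A) (lpOpNorm p (A + E)) ^ (n - 1) * lpOpNorm p E := by
  rcases le_total 2 p with hp | hp
  · exact friedland_aux_key_bound A E _ _ _
      (fun i => friedland_aux_row_sqrt_le p hp A i)
      (fun i => friedland_aux_row_sqrt_le p hp (A+E) i)
      (fun i => friedland_aux_row_sqrt_le p hp E i)
  · have h := friedland_aux_key_bound Aᵀ Eᵀ (lpOpNorm p A) (lpOpNorm p (A+E)) (lpOpNorm p E)
      (fun i => by
        have := friedland_aux_col_sqrt_le p hp A i
        simpa [Matrix.transpose_apply] using this)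
      (fun i => by
        have := friedland_aux_col_sqrt_le p hp (A+E) i
        simpa [Matrix.transpose_apply, Matrix.add_apply] using this)
      (fun i => by
        have := friedland_aux_col_sqrt_le p hp E i
        simpa [Matrix.transpose_apply] using this)
    have heq2 : (Aᵀ + Eᵀ) = (A + E)ᵀ := (Matrix.transpose_add A E).symm
    rw [heq2, Matrix.det_transpose, Matrix.det_transpose] at h
    exact h

end
end

section
/- Let σ = {v_0, …, v_k} be a non-degenerate k-simplex in ℝ^n (k > 0), and let P be the n×k matrix whose i-th column is v_i − v_0. Then the smallest singular value of P satisfies σ_k(P) ≥ √k · Θ(σ) · L(σ), where Θ(σ) is the thickness of σ and L(σ) is its longest edge length. -/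
noncomputable section

open Metric

/-- The altitude of vertex `i` of the simplex with vertices `v`: the distance
from `v i` to the affine hull of the opposite facet. -/
def altitude {m k : ℕ} (v : Fin (k + 1) → EuclideanSpace ℝ (Fin m)) (i : Fin (k + 1)) : ℝ :=
  Metric.infDist (v i) (affineSpan ℝ (v '' {j | j ≠ i}) : Set (EuclideanSpace ℝ (Fin m)))

/-- The longest edge length of the simplex with vertices `v`. -/
def longestEdge {m k : ℕ} (v : Fin (k + 1) → EuclideanSpace ℝ (Fin m)) : ℝ :=
  sSup {d : ℝ | ∃ i j, d = dist (v i) (v j)}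

/-- The thickness of the simplex with vertices `v`. -/
def thickness {m k : ℕ} (v : Fin (k + 1) → EuclideanSpace ℝ (Fin m)) : ℝ :=
  if k = 0 then 1 else (sInf (Set.range (altitude v))) / (k * longestEdge v)

/-- The `m × k` matrix whose `j`-th column is `v (j+1) - v 0`. -/
def edgeMat {m k : ℕ} (v : Fin (k + 1) → EuclideanSpace ℝ (Fin m)) :
    Matrix (Fin m) (Fin k) ℝ :=
  Matrix.of fun i j => (v j.succ - v 0) i

/-- The smallest singular value of a matrix: the infimum of `‖P x‖` over unit
vectors `x` (Euclidean norms). -/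
def smallestSing {m k : ℕ} (P : Matrix (Fin m) (Fin k) ℝ) : ℝ :=
  sInf { r : ℝ | ∃ x : EuclideanSpace ℝ (Fin k), ‖x‖ = 1 ∧
    r = ‖(EuclideanSpace.equiv (Fin m) ℝ).symm (P.mulVec (EuclideanSpace.equiv (Fin k) ℝ x))‖ }

/-- Key estimate: if the coefficients `c` sum to zero and `c i ≠ 0`, then
`‖∑ c j • v j‖ ≥ |c i| ⬝ (altitude at i)`. -/
lemma abs_mul_altitude_le_norm_sum {m k : ℕ} (v : Fin (k + 1) → EuclideanSpace ℝ (Fin m))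
    (c : Fin (k + 1) → ℝ) (hc : ∑ j, c j = 0) (i : Fin (k + 1)) (hci : c i ≠ 0) :
    |c i| * altitude v i ≤ ‖∑ j, c j • v j‖ := by
  classical
  set w : EuclideanSpace ℝ (Fin m) := ∑ j, c j • v j with hw
  set W : {j : Fin (k + 1) // j ≠ i} → ℝ := fun j => -(c j) / c i with hWdef
  have hsum_erase : ∑ j ∈ Finset.univ.erase i, c j = -(c i) := by
    have := Finset.add_sum_erase Finset.univ c (Finset.mem_univ i)
    linarith [hc, this]
  have hmem : ∀ x : Fin (k + 1), x ∈ Finset.univ.erase i ↔ x ≠ i := by intro x; simp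
  have hsub : ∑ j : {j : Fin (k + 1) // j ≠ i}, c j = -(c i) := by
    rw [← hsum_erase]
    exact (Finset.sum_subtype (Finset.univ.erase i) hmem c).symm
  have hW1 : ∑ j : {j : Fin (k + 1) // j ≠ i}, W j = 1 := by
    simp only [hWdef, neg_div]
    rw [Finset.sum_neg_distrib, ← Finset.sum_div, hsub]
    field_simp
  have hrange : v '' {j | j ≠ i} = Set.range fun j : {j : Fin (k+1) // j ≠ i} => v j := by
    ext p
    simp only [Set.mem_image, Set.mem_range, Set.mem_setOf_eq, Subtype.exists]
    tauto
  have hy : (Finset.univ.affineCombination ℝ (fun j : {j : Fin (k+1) // j ≠ i} => v j) W)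
      ∈ affineSpan ℝ (v '' {j | j ≠ i}) := by
    rw [hrange]
    exact affineCombination_mem_affineSpan hW1 (fun j : {j : Fin (k+1) // j ≠ i} => v j)
  set y := Finset.univ.affineCombination ℝ (fun j : {j : Fin (k+1) // j ≠ i} => v j) W with hydef
  have hylin : y = ∑ j : {j : Fin (k+1) // j ≠ i}, W j • v j :=
    Finset.affineCombination_eq_linear_combination _ _ _ hW1
  have hkey : v i - y = (c i)⁻¹ • w := by
    have hsplit : (c i)⁻¹ • w = v i + ∑ j : {j : Fin (k+1) // j ≠ i}, (c j / c i) • v j := by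
      rw [hw, Finset.smul_sum]
      rw [← Finset.add_sum_erase Finset.univ (fun j => (c i)⁻¹ • (c j • v j)) (Finset.mem_univ i)]
      congr 1
      · rw [smul_smul, inv_mul_cancel₀ hci, one_smul]
      · rw [Finset.sum_subtype (Finset.univ.erase i) hmem (fun j => (c i)⁻¹ • (c j • v j))]
        apply Finset.sum_congr rfl
        intro j _
        rw [smul_smul, div_eq_inv_mul, mul_comm]
    rw [hsplit, hylin]
    simp only [hWdef, neg_div, neg_smul, Finset.sum_neg_distrib, sub_neg_eq_add]
  have hdist : altitude v i ≤ dist (v i) y := infDist_le_dist_of_mem hy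
  have hnorm : dist (v i) y = |c i|⁻¹ * ‖w‖ := by
    rw [dist_eq_norm, hkey, norm_smul]
    simp
  rw [hnorm] at hdist
  have hpos : (0:ℝ) < |c i| := abs_pos.mpr hci
  calc |c i| * altitude v i ≤ |c i| * (|c i|⁻¹ * ‖w‖) :=
        mul_le_mul_of_nonneg_left hdist hpos.le
    _ = ‖w‖ := by field_simp

lemma edgeMat_mulVec_eq {n k : ℕ} (v : Fin (k + 1) → EuclideanSpace ℝ (Fin n))
    (x : EuclideanSpace ℝ (Fin k)) :
    (EuclideanSpace.equiv (Fin n) ℝ).symm ((edgeMat v).mulVec (EuclideanSpace.equiv (Fin k) ℝ x))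
      = ∑ j, x j • (v j.succ - v 0) := by
  rw [ContinuousLinearEquiv.symm_apply_eq, map_sum]
  funext i
  rw [Finset.sum_apply]
  simp [edgeMat, Matrix.mulVec, dotProduct, mul_comm, mul_sub]

/-- **Thickness and singular value.**  For a non-degenerate `k`-simplex in `ℝ^n`
(`k > 0`), the smallest singular value of the matrix of edge vectors satisfies
`σ_k(P) ≥ √k · Θ(σ) · L(σ)`. -/
theorem smallestSing_ge_sqrt_mul_thickness_mul_longestEdge
    {n k : ℕ} (hk : 0 < k) (v : Fin (k + 1) → EuclideanSpace ℝ (Fin n))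
    (hv : AffineIndependent ℝ v) :
    smallestSing (edgeMat v) ≥ Real.sqrt k * thickness v * longestEdge v := by
  classical
  set a : ℝ := sInf (Set.range (altitude v)) with ha
  set L : ℝ := longestEdge v with hLdef
  -- the edge set is finite and contains a positive element
  have hedge_eq : {d : ℝ | ∃ i j, d = dist (v i) (v j)}
      = Set.range (fun p : Fin (k+1) × Fin (k+1) => dist (v p.1) (v p.2)) := by
    ext d
    constructor
    · rintro ⟨i, j, rfl⟩; exact ⟨(i, j), rfl⟩
    · rintro ⟨⟨i, j⟩, rfl⟩; exact ⟨i, j, rfl⟩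
  have hbddA : BddAbove {d : ℝ | ∃ i j, d = dist (v i) (v j)} := by
    rw [hedge_eq]; exact (Set.finite_range _).bddAbove
  have hne01 : v 0 ≠ v ⟨1, by omega⟩ := by
    intro h
    exact absurd (hv.injective h) (by simp [Fin.ext_iff])
  have hL : 0 < L := by
    have hd : (0:ℝ) < dist (v 0) (v ⟨1, by omega⟩) := dist_pos.mpr hne01
    have : dist (v 0) (v ⟨1, by omega⟩) ≤ L :=
      le_csSup hbddA ⟨0, ⟨1, by omega⟩, rfl⟩
    linarith
  -- altitudes: infimum is attained-ish bounds
  have hbddB : BddBelow (Set.range (altitude v)) := (Set.finite_range _).bddBelow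
  have ha_le : ∀ i, a ≤ altitude v i := fun i => csInf_le hbddB ⟨i, rfl⟩
  have ha_nonneg : 0 ≤ a := by
    apply le_csInf (Set.range_nonempty _)
    rintro b ⟨i, rfl⟩
    exact infDist_nonneg
  have hkpos : (0:ℝ) < (k:ℝ) := by exact_mod_cast hk
  have hs : (0:ℝ) < Real.sqrt k := Real.sqrt_pos.mpr hkpos
  have hss : Real.sqrt k * Real.sqrt k = (k:ℝ) := Real.mul_self_sqrt hkpos.le
  have hthick : thickness v = a / (k * L) := by
    rw [thickness, if_neg hk.ne']
  have hRHS : Real.sqrt k * thickness v * L = a / Real.sqrt k := by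
    rw [hthick]
    field_simp
    linear_combination a * hss
  rw [ge_iff_le, hRHS]
  -- now bound the infimum
  apply le_csInf
  · refine ⟨_, EuclideanSpace.single (⟨0, hk⟩ : Fin k) (1:ℝ), ?_, rfl⟩
    simp [EuclideanSpace.norm_single]
  rintro r ⟨x, hx, rfl⟩
  rw [edgeMat_mulVec_eq]
  -- the coefficient vector
  set c : Fin (k + 1) → ℝ := fun i => Fin.cases (-(∑ j, x j)) (fun j => x j) i with hcdef
  have hcs : ∀ j : Fin k, c j.succ = x j := fun j => by simp [hcdef]
  have hc0 : c 0 = -(∑ j, x j) := by simp [hcdef]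
  have hcsum : ∑ i, c i = 0 := by
    rw [Fin.sum_univ_succ, hc0]
    simp only [hcs]
    ring
  have hvecsum : ∑ i, c i • v i = ∑ j, x j • (v j.succ - v 0) := by
    rw [Fin.sum_univ_succ, hc0]
    simp only [hcs, smul_sub, neg_smul]
    rw [Finset.sum_sub_distrib, ← Finset.sum_smul]
    abel
  -- pick the largest coordinate
  obtain ⟨j0, -, hj0⟩ := Finset.exists_max_image Finset.univ (fun j => |x j|)
    ⟨⟨0, hk⟩, Finset.mem_univ _⟩
  have hx2 : ∑ j, x j ^ 2 = 1 := by
    have h := EuclideanSpace.norm_eq x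
    rw [hx] at h
    have := (Real.sqrt_eq_one.mp h.symm)
    simpa [sq_abs] using this
  have hb : (1:ℝ) ≤ k * x j0 ^ 2 := by
    have hle : ∑ j, x j ^ 2 ≤ ∑ _j : Fin k, x j0 ^ 2 := by
      apply Finset.sum_le_sum
      intro j _
      calc x j ^ 2 = |x j| ^ 2 := (sq_abs _).symm
        _ ≤ |x j0| ^ 2 := by
            apply pow_le_pow_left₀ (abs_nonneg _) (hj0 j (Finset.mem_univ j))
        _ = x j0 ^ 2 := sq_abs _
    rw [hx2] at hle
    simpa [Finset.sum_const, nsmul_eq_mul] using hle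
  have hcj0 : x j0 ≠ 0 := by
    intro h
    rw [h] at hb
    simp at hb
    linarith
  have hmax : Real.sqrt k⁻¹ ≤ |x j0| := by
    have h1 : (k:ℝ)⁻¹ ≤ x j0 ^ 2 := by
      rw [inv_le_iff_one_le_mul₀ hkpos]
      linarith
    calc Real.sqrt (k:ℝ)⁻¹ ≤ Real.sqrt (x j0 ^ 2) := Real.sqrt_le_sqrt h1
      _ = |x j0| := Real.sqrt_sq_eq_abs _
  have hkey := abs_mul_altitude_le_norm_sum v c hcsum j0.succ (by rw [hcs]; exact hcj0)
  rw [hvecsum, hcs] at hkey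
  have haj : altitude v j0.succ ≥ 0 := infDist_nonneg
  calc a / Real.sqrt k = a * Real.sqrt (k:ℝ)⁻¹ := by
        rw [Real.sqrt_inv]; ring
    _ ≤ altitude v j0.succ * |x j0| :=
        mul_le_mul (ha_le j0.succ) hmax (Real.sqrt_nonneg _) haj
    _ = |x j0| * altitude v j0.succ := mul_comm _ _
    _ ≤ _ := hkey

end
end

section
/- Let σ = {v_0, …, v_k} be a non-degenerate k-simplex in ℝ^n with associated matrix P (columns v_i − v_0). Then the i-th row of the pseudo-inverse P⁺ = (PᵀP)⁻¹Pᵀ is wᵢᵀ where w_i is orthogonal to the affine hull of the facet opposite v_i and ‖w_i‖ = 1/a_i, the reciprocal of the altitude of v_i. -/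
noncomputable section

open Metric Matrix

lemma posDef_aux {n k : ℕ} (P : Matrix (Fin n) (Fin k) ℝ)
    (hP : ∀ x : Fin k → ℝ, P.mulVec x = 0 → x = 0) : (Pᵀ * P).PosDef := by
  rw [Matrix.posDef_iff_dotProduct_mulVec]
  constructor
  · have := Matrix.isHermitian_conjTranspose_mul_self P
    simpa [Matrix.conjTranspose_eq_transpose_of_trivial] using this
  · intro x hx
    have h1 : star x ⬝ᵥ ((Pᵀ * P) *ᵥ x) = (P *ᵥ x) ⬝ᵥ (P *ᵥ x) := by
      rw [← Matrix.mulVec_mulVec, Matrix.dotProduct_mulVec, Matrix.vecMul_transpose]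
      simp
    rw [h1]
    have h2 : P *ᵥ x ≠ 0 := fun h => hx (hP x h)
    have hnn : 0 ≤ (P *ᵥ x) ⬝ᵥ (P *ᵥ x) :=
      Finset.sum_nonneg fun m _ => mul_self_nonneg _
    rcases hnn.lt_or_eq with h | h
    · exact h
    · exact absurd (dotProduct_self_eq_zero.mp h.symm) h2

lemma pilp_sum_apply {n kk : ℕ} (c : Fin kk → ℝ) (u : Fin kk → EuclideanSpace ℝ (Fin n))
    (m : Fin n) : (∑ a, c a • u a) m = ∑ a, c a * u a m := by
  induction (Finset.univ : Finset (Fin kk)) using Finset.induction with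
  | empty => simp
  | insert _ _ h ih => rw [Finset.sum_insert h, Finset.sum_insert h, ← ih]; rfl


/-- **Rows of the pseudo-inverse.** -/
theorem pseudoInverse_rows {n k : ℕ} (hk : 0 < k)
    (v : Fin (k + 1) → EuclideanSpace ℝ (Fin n)) (hv : AffineIndependent ℝ v)
    (i : Fin k) :
    let P : Matrix (Fin n) (Fin k) ℝ := edgeMat v
    let w : EuclideanSpace ℝ (Fin n) :=
      (EuclideanSpace.equiv (Fin n) ℝ).symm (fun j => ((Pᵀ * P)⁻¹ * Pᵀ) i j)
    (∀ x ∈ (affineSpan ℝ (v '' {j | j ≠ i.succ}) : Set (EuclideanSpace ℝ (Fin n))),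
      ∀ y ∈ (affineSpan ℝ (v '' {j | j ≠ i.succ}) : Set (EuclideanSpace ℝ (Fin n))),
        (inner ℝ w (x - y) : ℝ) = 0) ∧
    ‖w‖ = (altitude v i.succ)⁻¹ := by
  intro P w
  set u : Fin k → EuclideanSpace ℝ (Fin n) := fun j => v j.succ - v 0 with hu
  -- linear independence of the edge vectors
  have hli : LinearIndependent ℝ u := by
    rw [affineIndependent_iff_linearIndependent_vsub ℝ v 0] at hv
    have := hv.comp (fun j : Fin k => (⟨j.succ, Fin.succ_ne_zero j⟩ : {x : Fin (k+1) // x ≠ 0}))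
      (fun a b hab => by simpa using Fin.succ_injective _ (congrArg Subtype.val hab))
    simpa [hu, vsub_eq_sub, Function.comp_def] using this
  have hPapp : ∀ m j, P m j = u j m := fun m j => rfl
  have hker : ∀ x : Fin k → ℝ, P.mulVec x = 0 → x = 0 := by
    intro x hx
    have hsum : ∑ j, x j • u j = 0 := by
      apply PiLp.ext
      intro m
      rw [pilp_sum_apply]
      have h := congrFun hx m
      simpa [Matrix.mulVec, dotProduct, hPapp, mul_comm] using h
    funext j
    exact Fintype.linearIndependent_iff.mp hli x hsum j
  have hG : (Pᵀ * P).PosDef := posDef_aux P hker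
  have hGdet : IsUnit (Pᵀ * P).det := isUnit_iff_ne_zero.mpr hG.det_pos.ne'
  have hGinv : (Pᵀ * P)⁻¹ * (Pᵀ * P) = 1 := Matrix.nonsing_inv_mul _ hGdet
  have hwapp : ∀ m, w m = ((Pᵀ * P)⁻¹ * Pᵀ) i m := fun m => rfl
  have hwu : ∀ j, (inner ℝ w (u j) : ℝ) = if i = j then 1 else 0 := by
    intro j
    have : (inner ℝ w (u j) : ℝ) = (((Pᵀ * P)⁻¹ * Pᵀ) * P) i j := by
      rw [Matrix.mul_apply]
      simp only [PiLp.inner_apply, RCLike.inner_apply, starRingEnd_apply, star_trivial]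
      exact Finset.sum_congr rfl fun m _ => by rw [hwapp, hPapp, mul_comm]
    rw [this, Matrix.mul_assoc, hGinv, Matrix.one_apply]
  -- w as a combination of the edge vectors
  set c : Fin k → ℝ := fun a => (Pᵀ * P)⁻¹ i a with hc
  have hwsum : w = ∑ a, c a • u a := by
    apply PiLp.ext
    intro m
    rw [pilp_sum_apply, hwapp, Matrix.mul_apply]
    exact Finset.sum_congr rfl fun a _ => by rw [Matrix.transpose_apply, hPapp]
  have hnormsq : (inner ℝ w w : ℝ) = c i := by
    nth_rewrite 2 [hwsum]
    rw [inner_sum]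
    simp only [real_inner_smul_right, hwu]
    simp
  have hw0 : w ≠ 0 := by
    intro h
    have := hwu i
    rw [h] at this
    simp at this
  have hnormpos : (0:ℝ) < ‖w‖ := norm_pos_iff.mpr hw0
  have hci : c i = ‖w‖ ^ 2 := by rw [← hnormsq, real_inner_self_eq_norm_sq]
  have hcipos : (0:ℝ) < c i := by rw [hci]; positivity
  -- the facet and its span
  set S : Set (EuclideanSpace ℝ (Fin n)) := v '' {j | j ≠ i.succ} with hS
  have hv0S : v 0 ∈ S := ⟨0, (Fin.succ_ne_zero i).symm, rfl⟩
  have hv0span : v 0 ∈ affineSpan ℝ S := subset_affineSpan ℝ S hv0S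
  have huV : ∀ a : Fin k, a ≠ i → u a ∈ vectorSpan ℝ S := by
    intro a ha
    have h1 : v a.succ ∈ S := ⟨a.succ, fun h => ha (Fin.succ_injective _ h), rfl⟩
    have := vsub_mem_vectorSpan ℝ h1 hv0S
    simpa [vsub_eq_sub] using this
  have horth : ∀ z ∈ vectorSpan ℝ S, (inner ℝ w z : ℝ) = 0 := by
    have hle : vectorSpan ℝ S ≤ (ℝ ∙ w)ᗮ := by
      rw [vectorSpan_eq_span_vsub_set_right ℝ hv0S, Submodule.span_le]
      rintro z ⟨x, ⟨j, hj, rfl⟩, rfl⟩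
      rw [SetLike.mem_coe, Submodule.mem_orthogonal_singleton_iff_inner_right]
      induction j using Fin.cases with
      | zero => simp
      | succ a =>
        have ha : a ≠ i := fun h => hj (by simp [h])
        show (inner ℝ w (v a.succ - v 0) : ℝ) = 0
        rw [show v a.succ - v 0 = u a from rfl, hwu a, if_neg (fun h => ha h.symm)]
    intro z hz
    exact Submodule.mem_orthogonal_singleton_iff_inner_right.mp (hle hz)
  have hdirorth : ∀ z ∈ (affineSpan ℝ S).direction, (inner ℝ w z : ℝ) = 0 := by
    intro z hz
    exact horth z (by rwa [← direction_affineSpan ℝ S])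
  constructor
  · intro x hx y hy
    have hxy : x - y ∈ (affineSpan ℝ S).direction := by
      have := AffineSubspace.vsub_mem_direction hx hy
      simpa [vsub_eq_sub] using this
    exact hdirorth _ hxy
  · -- norm computation
    set q : EuclideanSpace ℝ (Fin n) := v i.succ - (c i)⁻¹ • w with hq
    have hqdir : u i - (c i)⁻¹ • w ∈ vectorSpan ℝ S := by
      have hw' : (c i)⁻¹ • w = ∑ a, ((c i)⁻¹ * c a) • u a := by
        rw [hwsum, Finset.smul_sum]
        exact Finset.sum_congr rfl fun a _ => smul_smul _ _ _
      have hsplit : ∑ a, ((c i)⁻¹ * c a) • u a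
          = u i + ∑ a ∈ Finset.univ.erase i, ((c i)⁻¹ * c a) • u a := by
        rw [← Finset.add_sum_erase _ _ (Finset.mem_univ i)]
        congr 1
        rw [inv_mul_cancel₀ hcipos.ne', one_smul]
      have heq : u i - (c i)⁻¹ • w
          = -∑ a ∈ Finset.univ.erase i, ((c i)⁻¹ * c a) • u a := by
        rw [hw', hsplit]; abel
      rw [heq]
      exact neg_mem (Submodule.sum_mem _ fun a ha =>
        Submodule.smul_mem _ _ (huV a (Finset.ne_of_mem_erase ha)))
    have hqmem : q ∈ affineSpan ℝ S := by
      have hqeq : q = (u i - (c i)⁻¹ • w) +ᵥ v 0 := by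
        show q = (u i - (c i)⁻¹ • w) + v 0
        rw [hq, show u i = v i.succ - v 0 from rfl]
        abel
      rw [hqeq]
      exact AffineSubspace.vadd_mem_of_mem_direction
        (by rwa [direction_affineSpan]) hv0span
    have hdistq : dist (v i.succ) q = ‖w‖⁻¹ := by
      rw [dist_eq_norm, hq, sub_sub_cancel, norm_smul, hci]
      rw [Real.norm_eq_abs, abs_of_pos (by positivity), pow_two]
      field_simp
    have hlb : ∀ y ∈ (affineSpan ℝ S : Set (EuclideanSpace ℝ (Fin n))),
        ‖w‖⁻¹ ≤ dist (v i.succ) y := by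
      intro y hy
      have hinner1 : (inner ℝ w (v i.succ - y) : ℝ) = 1 := by
        have hdec : v i.succ - y = u i + (v 0 - y) := by
          rw [show u i = v i.succ - v 0 from rfl]; abel
        rw [hdec, inner_add_right, hwu i, if_pos rfl]
        have h0 : (inner ℝ w (v 0 - y) : ℝ) = 0 := by
          have := AffineSubspace.vsub_mem_direction hv0span hy
          exact hdirorth _ (by simpa [vsub_eq_sub] using this)
        rw [h0]; ring
      have hCS : (1:ℝ) ≤ ‖w‖ * ‖v i.succ - y‖ := by
        rw [← hinner1]
        exact real_inner_le_norm _ _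
      rw [dist_eq_norm, inv_le_iff_one_le_mul₀ hnormpos]
      linarith [hCS]
    have hinf : Metric.infDist (v i.succ)
        (affineSpan ℝ S : Set (EuclideanSpace ℝ (Fin n))) = ‖w‖⁻¹ := by
      apply le_antisymm
      · calc Metric.infDist (v i.succ) (affineSpan ℝ S : Set (EuclideanSpace ℝ (Fin n)))
            ≤ dist (v i.succ) q := Metric.infDist_le_dist_of_mem hqmem
          _ = ‖w‖⁻¹ := hdistq
      · by_contra h
        push_neg at h
        obtain ⟨y, hy, hlt⟩ := (Metric.infDist_lt_iff ⟨v 0, hv0span⟩).mp h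
        exact absurd (hlb y hy) (not_le.mpr hlt)
    have halt : altitude v i.succ = ‖w‖⁻¹ := hinf
    rw [halt, inv_inv]


end
end

section
/- Let σ = {v_0, …, v_k} be a k-simplex in ℝ^n in which some vertex v_i with i ≠ 0 realises an altitude at least as small as the altitude of v_0 (i.e., a_i ≤ a_0). Then Θ(σ) ≥ σ_k(P) / (k · L(σ)), where P is the matrix of edge vectors v_i − v_0, σ_k(P) its smallest singular value, L(σ) the longest edge length, and Θ(σ) the thickness. -/
noncomputable section

open Metric Matrix

-- auxiliary lemmas

lemma mulVec_eq_sum {n k : ℕ} (v : Fin (k + 1) → EuclideanSpace ℝ (Fin n)) (y : Fin k → ℝ) :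
    (EuclideanSpace.equiv (Fin n) ℝ).symm ((edgeMat v).mulVec y)
      = ∑ m : Fin k, y m • (v m.succ - v 0) := by
  apply PiLp.ext
  intro r
  have hsum : (∑ m : Fin k, y m • (v m.succ - v 0)) r = ∑ m : Fin k, y m * (v m.succ - v 0) r := by
    have h1 : (∑ m : Fin k, y m • (v m.succ - v 0)) r
        = ∑ m : Fin k, (y m • (v m.succ - v 0)) r :=
      by rw [WithLp.ofLp_sum]; exact Finset.sum_apply r Finset.univ _
    rw [h1]
    rfl
  rw [hsum]
  show (edgeMat v).mulVec y r = _
  simp [edgeMat, Matrix.mulVec, dotProduct, mul_comm]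

lemma smallestSing_le_norm {m k : ℕ} (P : Matrix (Fin m) (Fin k) ℝ)
    (y : EuclideanSpace ℝ (Fin k)) (hy : 1 ≤ ‖y‖) :
    smallestSing P ≤
      ‖(EuclideanSpace.equiv (Fin m) ℝ).symm (P.mulVec (EuclideanSpace.equiv (Fin k) ℝ y))‖ := by
  have hy0 : ‖y‖ ≠ 0 := by positivity
  set x : EuclideanSpace ℝ (Fin k) := ‖y‖⁻¹ • y with hx
  have hxn : ‖x‖ = 1 := by
    rw [hx, norm_smul, norm_inv, norm_norm, inv_mul_cancel₀ hy0]
  have hbdd : BddBelow { r : ℝ | ∃ x : EuclideanSpace ℝ (Fin k), ‖x‖ = 1 ∧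
      r = ‖(EuclideanSpace.equiv (Fin m) ℝ).symm (P.mulVec (EuclideanSpace.equiv (Fin k) ℝ x))‖ } := by
    refine ⟨0, fun r hr => ?_⟩
    obtain ⟨z, -, rfl⟩ := hr
    positivity
  have hmem : ‖(EuclideanSpace.equiv (Fin m) ℝ).symm (P.mulVec (EuclideanSpace.equiv (Fin k) ℝ x))‖ ∈
      { r : ℝ | ∃ x : EuclideanSpace ℝ (Fin k), ‖x‖ = 1 ∧
      r = ‖(EuclideanSpace.equiv (Fin m) ℝ).symm (P.mulVec (EuclideanSpace.equiv (Fin k) ℝ x))‖ } :=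
    ⟨x, hxn, rfl⟩
  refine le_trans (csInf_le hbdd hmem) ?_
  have hsmul : (EuclideanSpace.equiv (Fin k) ℝ) x = ‖y‖⁻¹ • (EuclideanSpace.equiv (Fin k) ℝ) y := rfl
  have hmv : P.mulVec ((EuclideanSpace.equiv (Fin k) ℝ) x)
      = ‖y‖⁻¹ • P.mulVec ((EuclideanSpace.equiv (Fin k) ℝ) y) := by
    rw [hsmul, Matrix.mulVec_smul]
  have heq : (EuclideanSpace.equiv (Fin m) ℝ).symm (P.mulVec ((EuclideanSpace.equiv (Fin k) ℝ) x))
      = ‖y‖⁻¹ • (EuclideanSpace.equiv (Fin m) ℝ).symm (P.mulVec ((EuclideanSpace.equiv (Fin k) ℝ) y)) := by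
    rw [hmv]; rfl
  rw [heq, norm_smul, norm_inv, norm_norm]
  calc ‖y‖⁻¹ * ‖(EuclideanSpace.equiv (Fin m) ℝ).symm (P.mulVec ((EuclideanSpace.equiv (Fin k) ℝ) y))‖
      ≤ 1 * ‖(EuclideanSpace.equiv (Fin m) ℝ).symm (P.mulVec ((EuclideanSpace.equiv (Fin k) ℝ) y))‖ := by
        gcongr
        exact inv_le_one_of_one_le₀ hy
    _ = _ := one_mul _


lemma smallestSing_le_altitude {n k : ℕ} (v : Fin (k + 1) → EuclideanSpace ℝ (Fin n))
    (i : Fin (k + 1)) (hi : i ≠ 0) :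
    smallestSing (edgeMat v) ≤ altitude v i := by
  classical
  set S : Set (EuclideanSpace ℝ (Fin n)) := ((affineSpan ℝ (v '' {j | j ≠ i}) : AffineSubspace ℝ (EuclideanSpace ℝ (Fin n))) : Set (EuclideanSpace ℝ (Fin n))) with hS
  have hv0mem : v 0 ∈ v '' {j | j ≠ i} := ⟨0, Ne.symm hi, rfl⟩
  have hv0S : v 0 ∈ S := subset_affineSpan ℝ _ hv0mem
  have hSne : S.Nonempty := ⟨v 0, hv0S⟩
  rw [altitude, Metric.infDist_eq_iInf]
  haveI : Nonempty (affineSpan ℝ (v '' {j | j ≠ i}) : Set (EuclideanSpace ℝ (Fin n))) :=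
    hSne.to_subtype
  refine le_ciInf fun p => ?_
  -- p : subtype
  obtain ⟨p, hp⟩ := p
  show smallestSing (edgeMat v) ≤ dist (v i) p
  set i' : Fin k := i.pred hi with hi'
  have hisucc : i'.succ = i := Fin.succ_pred i hi
  -- p - v 0 lies in the span of the columns other than i'
  have hdir : p - v 0 ∈ vectorSpan ℝ (v '' {j | j ≠ i}) := by
    have := AffineSubspace.vsub_mem_direction hp hv0S
    rwa [direction_affineSpan] at this
  have hspan : p - v 0 ∈ Submodule.span ℝ
      (Set.range fun m : {m : Fin k // m ≠ i'} => v m.1.succ - v 0) := by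
    have hvs : vectorSpan ℝ (v '' {j | j ≠ i})
        = Submodule.span ℝ ((· -ᵥ v 0) '' (v '' {j | j ≠ i})) :=
      vectorSpan_eq_span_vsub_set_right ℝ hv0mem
    rw [hvs] at hdir
    refine Submodule.span_le.2 ?_ hdir
    rintro u ⟨-, ⟨j, hj, rfl⟩, rfl⟩
    by_cases hj0 : j = 0
    · subst hj0
      simp only [vsub_eq_sub, sub_self]
      exact Submodule.zero_mem _
    · have hjp : (j.pred hj0).succ = j := Fin.succ_pred j hj0
      have hne : j.pred hj0 ≠ i' := by
        intro hcon
        apply hj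
        rw [← hjp, hcon, hisucc]
      apply Submodule.subset_span
      exact ⟨⟨j.pred hj0, hne⟩, by simp [hjp]⟩
  rw [Submodule.mem_span_range_iff_exists_fun] at hspan
  obtain ⟨c, hc⟩ := hspan
  set y : Fin k → ℝ := fun m => if hm : m = i' then 1 else -(c ⟨m, hm⟩) with hy
  have hsum : ∑ m : Fin k, y m • (v m.succ - v 0) = v i - p := by
    rw [← Finset.add_sum_erase Finset.univ (fun m => y m • (v m.succ - v 0))
      (Finset.mem_univ i')]
    have h1 : y i' • (v i'.succ - v 0) = v i - v 0 := by
      simp [hy, hisucc]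
    have h2 : ∑ m ∈ Finset.univ.erase i', y m • (v m.succ - v 0)
        = -(p - v 0) := by
      rw [← hc, ← Finset.sum_neg_distrib]
      rw [Finset.sum_subtype (p := fun m => m ≠ i') (Finset.univ.erase i')
        (fun m => by simp [Finset.mem_erase]) (fun m => y m • (v m.succ - v 0))]
      refine Finset.sum_congr rfl fun m _ => ?_
      have : y m.1 = -(c m) := by
        simp [hy, dif_neg m.2]
      rw [this, neg_smul]
    rw [h1, h2]
    abel
  set yE : EuclideanSpace ℝ (Fin k) := (EuclideanSpace.equiv (Fin k) ℝ).symm y with hyE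
  have hnormy : 1 ≤ ‖yE‖ := by
    have h1 : |y i'| ≤ ‖yE‖ := by
      have := EuclideanSpace.norm_eq yE
      rw [this]
      have hle : |y i'| = Real.sqrt (|y i'| ^ 2) := by
        rw [Real.sqrt_sq_eq_abs, abs_abs]
      rw [hle]
      apply Real.sqrt_le_sqrt
      have : ∀ j, (0:ℝ) ≤ ‖yE j‖ ^ 2 := fun j => sq_nonneg _
      have hj : |y i'| ^ 2 = ‖yE i'‖ ^ 2 := by
        norm_num [hyE]
      rw [hj]
      exact Finset.single_le_sum (fun j _ => this j) (Finset.mem_univ i')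
    have hyi : y i' = 1 := by simp [hy]
    rw [hyi] at h1
    simpa using h1
  have hkey := smallestSing_le_norm (edgeMat v) yE hnormy
  have heq : (EuclideanSpace.equiv (Fin k) ℝ) yE = y := rfl
  rw [heq, mulVec_eq_sum v y, hsum] at hkey
  rw [dist_eq_norm]
  exact hkey

/-- If some vertex other than `v 0` realises an altitude at least as small as that of
`v 0`, then the thickness is bounded below by `σ_k(P) / (k L(σ))`. -/
theorem thickness_ge_smallestSing_div {n k : ℕ} (hk : 0 < k)
    (v : Fin (k + 1) → EuclideanSpace ℝ (Fin n))
    (h : ∃ i : Fin (k + 1), i ≠ 0 ∧ altitude v i ≤ altitude v 0) :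
    thickness v ≥ smallestSing (edgeMat v) / (k * longestEdge v) := by
  obtain ⟨i, hi, hle⟩ := h
  rw [ge_iff_le, thickness, if_neg hk.ne']
  have hL : 0 ≤ longestEdge v := by
    have h0 : (0:ℝ) ∈ {d : ℝ | ∃ i j, d = dist (v i) (v j)} := ⟨0, 0, by simp⟩
    have hfin : {d : ℝ | ∃ i j, d = dist (v i) (v j)}.Finite := by
      have hset : {d : ℝ | ∃ i j, d = dist (v i) (v j)}
          = Set.range (fun p : Fin (k+1) × Fin (k+1) => dist (v p.1) (v p.2)) := by
        ext d
        constructor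
        · rintro ⟨a, b, rfl⟩; exact ⟨(a, b), rfl⟩
        · rintro ⟨⟨a, b⟩, rfl⟩; exact ⟨a, b, rfl⟩
      rw [hset]
      exact Set.finite_range _
    exact le_csSup hfin.bddAbove h0
  rcases hL.eq_or_lt with hL0 | hLpos
  · rw [← hL0, mul_zero, div_zero, div_zero]
  · have hpos : (0:ℝ) < (k : ℝ) * longestEdge v := by
      apply mul_pos _ hLpos
      exact_mod_cast hk
    rw [div_le_div_iff_of_pos_right hpos]
    refine le_csInf (Set.range_nonempty _) ?_
    rintro b ⟨j, rfl⟩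
    by_cases hj : j = 0
    · subst hj
      exact le_trans (smallestSing_le_altitude v i hi) hle
    · exact smallestSing_le_altitude v j hj


end
end

section
/- Let σ = {v_0,…,v_n} and σ̃ = {ṽ_0,…,ṽ_n} be two Euclidean n-simplices in ℝ^n such that | ‖ṽ_i − ṽ_j‖ − ‖v_i − v_j‖ | ≤ C_0 L(σ) for all i < j, with C_0 ≤ 2/3. Let A : ℝ^n → ℝ^n be the affine map with A(v_i) = ṽ_i for all i. Then for all x, y ∈ ℝ^n, | ‖A(x) − A(y)‖ − ‖x − y‖ | ≤ η ‖x − y‖ where η = 4 C_0 / Θ(σ)². -/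
noncomputable section

open Metric Matrix

lemma dist_le_longestEdge {m k : ℕ} (v : Fin (k + 1) → EuclideanSpace ℝ (Fin m))
    (a b : Fin (k + 1)) : dist (v a) (v b) ≤ longestEdge v := by
  apply le_csSup
  · have hsub : {d : ℝ | ∃ i j, d = dist (v i) (v j)} ⊆
        Set.range (fun p : Fin (k+1) × Fin (k+1) => dist (v p.1) (v p.2)) := by
      rintro d ⟨i, j, rfl⟩; exact ⟨(i, j), rfl⟩
    exact ((Set.finite_range _).subset hsub).bddAbove
  · exact ⟨a, b, rfl⟩

lemma longestEdge_nonneg {m k : ℕ} (v : Fin (k + 1) → EuclideanSpace ℝ (Fin m)) :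
    0 ≤ longestEdge v := by
  have := dist_le_longestEdge v 0 0
  simpa using this

set_option maxHeartbeats 2000000 in
/-- **Linear distortion bound for affine maps between simplices.** -/
theorem affine_metric_distortion {n : ℕ}
    (v vt : Fin (n + 1) → EuclideanSpace ℝ (Fin n))
    (hv : AffineIndependent ℝ v) (hvt : AffineIndependent ℝ vt)
    (C₀ : ℝ) (hC₀0 : 0 ≤ C₀) (hC₀ : C₀ ≤ 2 / 3)
    (hdist : ∀ i j : Fin (n + 1), i < j →
      |dist (vt i) (vt j) - dist (v i) (v j)| ≤ C₀ * longestEdge v)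
    (A : EuclideanSpace ℝ (Fin n) →ᵃ[ℝ] EuclideanSpace ℝ (Fin n))
    (hA : ∀ i, A (v i) = vt i) :
    ∀ x y : EuclideanSpace ℝ (Fin n),
      |dist (A x) (A y) - dist x y| ≤ 4 * C₀ / thickness v ^ 2 * dist x y := by
  intro x y
  rcases Nat.eq_zero_or_pos n with hn | hn
  · subst hn
    have hxy : x = y := Subsingleton.elim x y
    subst hxy
    simp [thickness]
  obtain ⟨p, rfl⟩ : ∃ p, n = p + 1 := ⟨n - 1, by omega⟩
  set L := longestEdge v with hLdef
  have hdL : ∀ a b, dist (v a) (v b) ≤ L := dist_le_longestEdge v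
  have hL0 : 0 ≤ L := longestEdge_nonneg v
  have hdist' : ∀ a b, |dist (vt a) (vt b) - dist (v a) (v b)| ≤ C₀ * L := by
    intro a b
    rcases lt_trichotomy a b with h | h | h
    · exact hdist a b h
    · subst h; simpa using mul_nonneg hC₀0 hL0
    · rw [dist_comm (vt a), dist_comm (v a)]; exact hdist b a h
  -- edge vectors
  set e : Fin (p + 1) → EuclideanSpace ℝ (Fin (p + 1)) := fun i => v i.succ - v 0 with hedef
  set B := A.linear with hBdef
  have hBe : ∀ i, B (e i) = vt i.succ - vt 0 := by
    intro i
    show A.linear (v i.succ - v 0) = vt i.succ - vt 0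
    rw [← vsub_eq_sub, A.linearMap_vsub, hA, hA, vsub_eq_sub]
  -- linear independence and basis
  have hli : LinearIndependent ℝ e := by
    have h := (affineIndependent_iff_linearIndependent_vsub ℝ v 0).mp hv
    have hinj : Function.Injective
        (fun i : Fin (p + 1) => (⟨i.succ, Fin.succ_ne_zero i⟩ : {x : Fin (p + 2) // x ≠ 0})) := by
      intro a b hab
      exact Fin.succ_injective _ (by simpa [Subtype.ext_iff] using hab)
    have hco := h.comp _ hinj
    have hee : e = (fun i : {x : Fin (p + 2) // x ≠ 0} => v ↑i -ᵥ v 0) ∘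
        (fun i : Fin (p + 1) => (⟨i.succ, Fin.succ_ne_zero i⟩ : {x : Fin (p + 2) // x ≠ 0})) := by
      funext i
      simp [hedef, vsub_eq_sub]
    rw [hee]
    exact hco
  have hcard : Fintype.card (Fin (p + 1)) = Module.finrank ℝ (EuclideanSpace ℝ (Fin (p + 1))) := by
    simp [finrank_euclideanSpace_fin]
  let b : Module.Basis (Fin (p + 1)) ℝ (EuclideanSpace ℝ (Fin (p + 1))) := basisOfLinearIndependentOfCardEqFinrank hli hcard
  have hb : ∀ i, b i = e i := fun i =>
    congrFun (coe_basisOfLinearIndependentOfCardEqFinrank hli hcard) i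
  set u := x - y with hudef
  set w : Fin (p + 1) → ℝ := fun i => b.repr u i with hwdef
  have hu : ∑ i, w i • e i = u := by
    have := b.sum_repr u
    simpa [hb] using this
  -- altitudes
  set m := sInf (Set.range (altitude v)) with hmdef
  have haltpos : ∀ i, 0 < altitude v i := by
    intro i
    have hni : v i ∉ affineSpan ℝ (v '' {j | j ≠ i}) := by
      have h := hv.notMem_affineSpan_diff i Set.univ
      have : Set.univ \ {i} = {j | j ≠ i} := by ext j; simp [Set.mem_diff]
      rwa [this] at h
    have hcl : IsClosed (affineSpan ℝ (v '' {j | j ≠ i}) : Set (EuclideanSpace ℝ (Fin (p + 1)))) :=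
      AffineSubspace.closed_of_finiteDimensional _
    have hne : (affineSpan ℝ (v '' {j | j ≠ i}) : Set (EuclideanSpace ℝ (Fin (p + 1)))).Nonempty := by
      obtain ⟨j, hj⟩ := exists_ne i
      exact ⟨v j, subset_affineSpan ℝ _ ⟨j, hj, rfl⟩⟩
    exact (hcl.notMem_iff_infDist_pos hne).mp hni
  have hm_mem : m ∈ Set.range (altitude v) :=
    (Set.range_nonempty _).csInf_mem (Set.finite_range _)
  have hm0 : 0 < m := by obtain ⟨i, hi⟩ := hm_mem; rw [← hi]; exact haltpos i
  have hmle : ∀ i, m ≤ altitude v i := fun i =>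
    csInf_le (Set.finite_range _).bddBelow ⟨i, rfl⟩
  -- coefficient bound via altitudes
  have hwalt : ∀ i, |w i| * altitude v i.succ ≤ ‖u‖ := by
    intro i
    rcases eq_or_ne (w i) 0 with h0 | h0
    · simp [h0]
    set c := (w i)⁻¹ with hcdef
    set S' := ∑ j ∈ Finset.univ.erase i, w j • e j with hS'def
    have hsplit : u = w i • e i + S' := by
      rw [← hu, hS'def]
      exact (Finset.add_sum_erase _ _ (Finset.mem_univ i)).symm
    have h1 : u - S' = w i • e i := by rw [hsplit]; abel
    have h2 : c • (u - S') = e i := by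
      rw [h1, smul_smul, hcdef, inv_mul_cancel₀ h0, one_smul]
    have hkey : v i.succ - c • u = v 0 - c • S' := by
      rw [sub_eq_sub_iff_sub_eq_sub]
      have : v i.succ - v 0 = e i := rfl
      rw [this, ← h2, smul_sub]
    set S := affineSpan ℝ (v '' {j | j ≠ i.succ}) with hSdef
    have hv0 : v 0 ∈ S := subset_affineSpan ℝ _ ⟨0, (Fin.succ_ne_zero i).symm, rfl⟩
    have hq : v 0 - c • S' ∈ S := by
      have hdir : -c • S' ∈ S.direction := by
        refine Submodule.smul_mem _ _ (Submodule.sum_mem _ fun j hj => Submodule.smul_mem _ _ ?_)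
        have hjne : j ≠ i := Finset.ne_of_mem_erase hj
        have hvj : v j.succ ∈ S := subset_affineSpan ℝ _
          ⟨j.succ, fun hc => hjne (Fin.succ_injective _ hc), rfl⟩
        have := AffineSubspace.vsub_mem_direction hvj hv0
        simpa [vsub_eq_sub] using this
      have := AffineSubspace.vadd_mem_of_mem_direction hdir hv0
      have heq : -c • S' +ᵥ v 0 = v 0 - c • S' := by
        simp [vadd_eq_add, neg_smul]; abel
      rwa [heq] at this
    have hle : altitude v i.succ ≤ dist (v i.succ) (v 0 - c • S') :=
      Metric.infDist_le_dist_of_mem hq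
    have hdq : dist (v i.succ) (v 0 - c • S') = ‖c • u‖ := by
      rw [← hkey, dist_eq_norm]
      congr 1
      abel
    calc |w i| * altitude v i.succ ≤ |w i| * ‖c • u‖ := by
          refine mul_le_mul_of_nonneg_left ?_ (abs_nonneg _)
          rw [← hdq]; exact hle
      _ = ‖u‖ := by
          rw [norm_smul, Real.norm_eq_abs, hcdef, abs_inv, ← mul_assoc,
            mul_inv_cancel₀ (abs_ne_zero.mpr h0), one_mul]
  -- Gram perturbation
  have hsq : ∀ a b : Fin (p + 2),
      |dist (vt a) (vt b) ^ 2 - dist (v a) (v b) ^ 2| ≤ 8 / 3 * C₀ * L ^ 2 := by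
    intro a b
    have h1 := hdist' a b
    have h2 := hdL a b
    have hd0 : 0 ≤ dist (v a) (v b) := dist_nonneg
    have hD0 : 0 ≤ dist (vt a) (vt b) := dist_nonneg
    have habs := abs_le.mp h1
    have heq : |dist (vt a) (vt b) ^ 2 - dist (v a) (v b) ^ 2| =
        |dist (vt a) (vt b) - dist (v a) (v b)| * (dist (vt a) (vt b) + dist (v a) (v b)) := by
      rw [← abs_of_nonneg (show (0:ℝ) ≤ dist (vt a) (vt b) + dist (v a) (v b) by positivity),
        ← abs_mul]
      ring_nf
    rw [heq]
    have hsum : dist (vt a) (vt b) + dist (v a) (v b) ≤ 2 * L + C₀ * L := by linarith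
    calc |dist (vt a) (vt b) - dist (v a) (v b)| * (dist (vt a) (vt b) + dist (v a) (v b))
        ≤ (C₀ * L) * (2 * L + C₀ * L) := by
          refine mul_le_mul h1 hsum (by positivity) (by positivity)
      _ ≤ 8 / 3 * C₀ * L ^ 2 := by
          have hcc : C₀ * C₀ ≤ 2 / 3 * C₀ := mul_le_mul_of_nonneg_right hC₀ hC₀0
          have := mul_le_mul_of_nonneg_right hcc (sq_nonneg L)
          nlinarith [this]
  have hinner : ∀ (a b' : EuclideanSpace ℝ (Fin (p + 1))), (inner ℝ a b' : ℝ) = (‖a‖ ^ 2 + ‖b'‖ ^ 2 - ‖a - b'‖ ^ 2) / 2 := by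
    intro a b'
    have := norm_sub_sq_real a b'
    linarith
  have hGram : ∀ i j, |(inner ℝ (B (e i)) (B (e j)) : ℝ) - (inner ℝ (e i) (e j) : ℝ)|
      ≤ 4 * C₀ * L ^ 2 := by
    intro i j
    have hBei : ‖B (e i)‖ = dist (vt i.succ) (vt 0) := by rw [hBe, dist_eq_norm]
    have hBej : ‖B (e j)‖ = dist (vt j.succ) (vt 0) := by rw [hBe, dist_eq_norm]
    have hBsub : ‖B (e i) - B (e j)‖ = dist (vt i.succ) (vt j.succ) := by
      rw [hBe, hBe, dist_eq_norm]
      congr 1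
      abel
    have hei : ‖e i‖ = dist (v i.succ) (v 0) := by rw [dist_eq_norm]
    have hej : ‖e j‖ = dist (v j.succ) (v 0) := by rw [dist_eq_norm]
    have hesub : ‖e i - e j‖ = dist (v i.succ) (v j.succ) := by
      rw [dist_eq_norm]
      congr 1
      show (v i.succ - v 0) - (v j.succ - v 0) = v i.succ - v j.succ
      abel
    rw [hinner, hinner, hBei, hBej, hBsub, hei, hej, hesub]
    have hx1 := abs_le.mp (hsq i.succ 0)
    have hx2 := abs_le.mp (hsq j.succ 0)
    have hx3 := abs_le.mp (hsq i.succ j.succ)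
    rw [abs_le]
    constructor <;> [linarith ; linarith]
  -- quadratic form bound
  have hnormsq : ∀ f : Fin (p + 1) → EuclideanSpace ℝ (Fin (p + 1)),
      ‖∑ i, w i • f i‖ ^ 2 = ∑ i, ∑ j, w i * w j * (inner ℝ (f i) (f j) : ℝ) := by
    intro f
    rw [← real_inner_self_eq_norm_sq, sum_inner]
    refine Finset.sum_congr rfl fun i _ => ?_
    rw [inner_sum]
    refine Finset.sum_congr rfl fun j _ => ?_
    rw [real_inner_smul_left, real_inner_smul_right]
    ring
  have hBu : B u = ∑ i, w i • B (e i) := by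
    rw [← hu, map_sum]
    exact Finset.sum_congr rfl fun i _ => B.map_smul _ _
  have hkey2 : |‖B u‖ ^ 2 - ‖u‖ ^ 2| ≤ 4 * C₀ * L ^ 2 * (∑ i, |w i|) ^ 2 := by
    have hdiff : ‖B u‖ ^ 2 - ‖u‖ ^ 2 =
        ∑ i, ∑ j, w i * w j * ((inner ℝ (B (e i)) (B (e j)) : ℝ) - (inner ℝ (e i) (e j) : ℝ)) := by
      rw [hBu, hnormsq, ← hu, hnormsq, ← Finset.sum_sub_distrib]
      refine Finset.sum_congr rfl fun i _ => ?_
      rw [← Finset.sum_sub_distrib]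
      refine Finset.sum_congr rfl fun j _ => ?_
      ring
    rw [hdiff]
    calc |∑ i, ∑ j, w i * w j * ((inner ℝ (B (e i)) (B (e j)) : ℝ) - (inner ℝ (e i) (e j) : ℝ))|
        ≤ ∑ i, ∑ j, |w i| * |w j| * (4 * C₀ * L ^ 2) := by
          refine (Finset.abs_sum_le_sum_abs _ _).trans (Finset.sum_le_sum fun i _ => ?_)
          refine (Finset.abs_sum_le_sum_abs _ _).trans (Finset.sum_le_sum fun j _ => ?_)
          rw [abs_mul, abs_mul]
          exact mul_le_mul_of_nonneg_left (hGram i j)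
            (mul_nonneg (abs_nonneg _) (abs_nonneg _))
      _ = 4 * C₀ * L ^ 2 * (∑ i, |w i|) ^ 2 := by
          have hsq2 : (∑ i, |w i|) ^ 2 = ∑ i, ∑ j, |w i| * |w j| := by
            rw [pow_two, Finset.sum_mul_sum]
          rw [hsq2, Finset.mul_sum]
          refine Finset.sum_congr rfl fun i _ => ?_
          rw [Finset.mul_sum]
          refine Finset.sum_congr rfl fun j _ => ?_
          ring
  -- bound on coefficients
  have hL0' : 0 < L := by
    have h01 : (0 : Fin (p + 2)) ≠ 1 := by
      simp [Fin.ext_iff]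
    have : 0 < dist (v 0) (v 1) :=
      dist_pos.mpr (fun hc => h01 (hv.injective hc))
    exact lt_of_lt_of_le this (hdL 0 1)
  have hwm : ∀ i, |w i| ≤ ‖u‖ / m := by
    intro i
    rw [le_div_iff₀ hm0]
    calc |w i| * m ≤ |w i| * altitude v i.succ :=
          mul_le_mul_of_nonneg_left (hmle i.succ) (abs_nonneg _)
      _ ≤ ‖u‖ := hwalt i
  have hsumw : ∑ i, |w i| ≤ (p + 1 : ℝ) * (‖u‖ / m) := by
    calc ∑ i, |w i| ≤ ∑ _i : Fin (p + 1), ‖u‖ / m := Finset.sum_le_sum fun i _ => hwm i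
      _ = (p + 1 : ℝ) * (‖u‖ / m) := by
          rw [Finset.sum_const, Finset.card_univ, nsmul_eq_mul]
          norm_num
  have hsumw0 : 0 ≤ ∑ i, |w i| := Finset.sum_nonneg fun i _ => abs_nonneg _
  -- thickness
  have hth : thickness v = m / ((p + 1 : ℝ) * L) := by
    rw [thickness, if_neg (Nat.succ_ne_zero p)]
    norm_num [hmdef, hLdef]
  have hN0 : (0 : ℝ) < (p + 1 : ℝ) := by positivity
  have hth0 : 0 < thickness v := by
    rw [hth]; exact div_pos hm0 (mul_pos hN0 hL0')
  have hfinal2 : |‖B u‖ ^ 2 - ‖u‖ ^ 2| ≤ 4 * C₀ / thickness v ^ 2 * ‖u‖ ^ 2 := by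
    have h1 : (∑ i, |w i|) ^ 2 ≤ ((p + 1 : ℝ) * (‖u‖ / m)) ^ 2 := by
      exact pow_le_pow_left₀ hsumw0 hsumw 2
    have h2 : 4 * C₀ * L ^ 2 * ((p + 1 : ℝ) * (‖u‖ / m)) ^ 2
        = 4 * C₀ / thickness v ^ 2 * ‖u‖ ^ 2 := by
      rw [hth]
      field_simp
    calc |‖B u‖ ^ 2 - ‖u‖ ^ 2| ≤ 4 * C₀ * L ^ 2 * (∑ i, |w i|) ^ 2 := hkey2
      _ ≤ 4 * C₀ * L ^ 2 * ((p + 1 : ℝ) * (‖u‖ / m)) ^ 2 := by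
          refine mul_le_mul_of_nonneg_left h1 (by positivity)
      _ = 4 * C₀ / thickness v ^ 2 * ‖u‖ ^ 2 := h2
  -- conclude
  have hAxy : dist (A x) (A y) = ‖B u‖ := by
    rw [dist_eq_norm]
    congr 1
    have := A.linearMap_vsub x y
    simpa [vsub_eq_sub, hudef] using this.symm
  have hxy : dist x y = ‖u‖ := by rw [dist_eq_norm]
  rw [hAxy, hxy]
  set t := ‖B u‖ with htdef
  set s := ‖u‖ with hsdef
  have ht0 : 0 ≤ t := norm_nonneg _
  have hs0 : 0 ≤ s := norm_nonneg _
  have hη0 : 0 ≤ 4 * C₀ / thickness v ^ 2 := div_nonneg (by linarith) (sq_nonneg _)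
  rcases eq_or_lt_of_le hs0 with hs | hs
  · have hu0 : u = 0 := by
      rw [← norm_eq_zero]; exact hs.symm
    have hBu0 : B u = 0 := by rw [hu0]; exact map_zero B
    have ht' : t = 0 := by rw [htdef, hBu0]; exact norm_zero
    rw [ht', ← hs]
    simp
  · have hprod : |t - s| * (t + s) = |t ^ 2 - s ^ 2| := by
      rw [← abs_of_nonneg (show (0:ℝ) ≤ t + s by linarith), ← abs_mul]
      ring_nf
    have hb2 : |t - s| * (t + s) ≤ 4 * C₀ / thickness v ^ 2 * s ^ 2 := by
      rw [hprod]; exact hfinal2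
    nlinarith [abs_nonneg (t - s), mul_nonneg (abs_nonneg (t - s)) ht0]

end
end
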